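/- Let K be a field, n ≥ 1, and let X ∈ M_n(K) be a regular nilpotent matrix, i.e. Xⁿ = 0 and X^{n−1} ≠ 0. Let C = {g ∈ GL_n(K) : gX = Xg}. Then an element g ∈ GL_n(K) normalizes C (i.e. gCg⁻¹ = C) if and only if gXg⁻¹ = c₁X + c₂X² + ⋯ + c_{n−1}X^{n−1} for some c_i ∈ K with c₁ ≠ 0. -/

import Mathlib

private lemma pow_zero_of_le {K : Type*} [Field K] {n : ℕ} {X : Matrix (Fin n) (Fin n) K}
    (hXn : X ^ n = 0) {m : ℕ} (h : n ≤ m) : X ^ m = 0 := by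
  have : m = n + (m - n) := by omega
  rw [this, pow_add, hXn, zero_mul]

private lemma commute_sum_smul_pow {K R : Type*} [Field K] [Ring R] [Algebra K R]
    {a x : R} (h : Commute a x) {ι : Type*} (s : Finset ι) (c : ι → K) (f : ι → ℕ) :
    Commute a (∑ i ∈ s, c i • x ^ f i) :=
  Commute.sum_right _ _ _ fun i _ => ((h.pow_right (f i)).smul_right (c i))

private lemma sum_smul_mulVec {K : Type*} [Field K] {n : ℕ} {ι : Type*} (s : Finset ι)
    (c : ι → K) (M : ι → Matrix (Fin n) (Fin n) K) (v : Fin n → K) :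
    (∑ i ∈ s, c i • M i).mulVec v = ∑ i ∈ s, c i • (M i).mulVec v := by
  classical
  induction s using Finset.induction with
  | empty => simp [Matrix.zero_mulVec]
  | insert _ _ h ih => simp [Finset.sum_insert h, Matrix.add_mulVec, Matrix.smul_mulVec, ih]

/-- The centralizer of a regular nilpotent matrix consists of polynomials in it. -/
private lemma exists_rep {K : Type*} [Field K] {n : ℕ} (hn : 1 ≤ n)
    (X : Matrix (Fin n) (Fin n) K) (hXn : X ^ n = 0) (hXreg : X ^ (n - 1) ≠ 0)
    (A : Matrix (Fin n) (Fin n) K) (hA : A * X = X * A) :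
    ∃ c : Fin n → K, A = ∑ i : Fin n, c i • X ^ (i : ℕ) := by
  haveI : Nonempty (Fin n) := Fin.pos_iff_nonempty.mp hn
  obtain ⟨v, hv⟩ : ∃ v, (X ^ (n - 1)).mulVec v ≠ 0 := by
    by_contra h
    push_neg at h
    apply hXreg
    ext i j
    have := congrFun (h (Pi.single j 1)) i
    simpa [Matrix.mulVec_single] using this
  have li : LinearIndependent K (fun i : Fin n => (X ^ (i : ℕ)).mulVec v) := by
    rw [Fintype.linearIndependent_iff]
    intro a ha
    have key : ∀ m : ℕ, ∀ i : Fin n, (i : ℕ) = m → a i = 0 := by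
      intro m
      induction m using Nat.strong_induction_on with
      | _ m ih =>
        intro i him
        have hilt : (i : ℕ) < n := i.isLt
        have h0 : (X ^ (n - 1 - m)).mulVecLin (∑ j : Fin n, a j • (X ^ (j : ℕ)).mulVec v) = 0 := by
          rw [ha, map_zero]
        rw [map_sum] at h0
        have h1 : ∀ j : Fin n, (X ^ (n - 1 - m)).mulVecLin (a j • (X ^ (j : ℕ)).mulVec v)
            = a j • (X ^ (n - 1 - m + (j : ℕ))).mulVec v := by
          intro j
          rw [map_smul, Matrix.mulVecLin_apply, Matrix.mulVec_mulVec, ← pow_add]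
        rw [Finset.sum_congr rfl (fun j _ => h1 j)] at h0
        rw [Finset.sum_eq_single i ?h₀ ?h₁] at h0
        · have hexp : n - 1 - m + (i : ℕ) = n - 1 := by omega
          rw [hexp] at h0
          exact (smul_eq_zero.mp h0).resolve_right hv
        case h₀ =>
          intro b _ hbne
          have hbm : (b : ℕ) ≠ m := fun hh => hbne (Fin.ext (by omega))
          rcases Nat.lt_or_ge (b : ℕ) m with hlt | hge
          · rw [ih _ hlt b rfl, zero_smul]
          · rw [pow_zero_of_le hXn (show n ≤ n - 1 - m + (b : ℕ) by omega),
              Matrix.zero_mulVec, smul_zero]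
        case h₁ =>
          intro habs
          exact absurd (Finset.mem_univ i) habs
    exact fun i => key (i : ℕ) i rfl
  have hcard : Fintype.card (Fin n) = Module.finrank K (Fin n → K) := by
    simp [Module.finrank_fin_fun]
  let b := basisOfLinearIndependentOfCardEqFinrank li hcard
  have hb : ∀ i, b i = (X ^ (i : ℕ)).mulVec v := fun i => by
    rw [show b = basisOfLinearIndependentOfCardEqFinrank li hcard from rfl,
      coe_basisOfLinearIndependentOfCardEqFinrank]
  set c : Fin n → K := fun i => b.repr (A.mulVec v) i with hc
  refine ⟨c, ?_⟩
  set B := ∑ i : Fin n, c i • X ^ (i : ℕ) with hB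
  have hBX : Commute X B := commute_sum_smul_pow (Commute.refl X) _ _ _
  have hBv : A.mulVec v = B.mulVec v := by
    rw [hB, sum_smul_mulVec]
    have := b.sum_repr (A.mulVec v)
    rw [Finset.sum_congr rfl (fun i _ => by rw [hb i])] at this
    exact this.symm
  apply Matrix.toLin'.injective
  apply b.ext
  intro i
  rw [Matrix.toLin'_apply, Matrix.toLin'_apply, hb i]
  have hAX : A * X ^ (i : ℕ) = X ^ (i : ℕ) * A := (Commute.pow_right hA (i : ℕ))
  have hBX' : B * X ^ (i : ℕ) = X ^ (i : ℕ) * B := ((hBX.symm).pow_right (i : ℕ))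
  rw [Matrix.mulVec_mulVec, Matrix.mulVec_mulVec, hAX, hBX',
    ← Matrix.mulVec_mulVec, ← Matrix.mulVec_mulVec, hBv]

/-- The centralizer `C = {g ∈ GLₙ(K) : gX = Xg}` of a matrix `X ∈ Mₙ(K)`,
as a subgroup of the group `GLₙ(K) = (Mₙ(K))ˣ` of invertible matrices. -/
def matrixCentralizer {K : Type*} [Field K] {n : ℕ} (X : Matrix (Fin n) (Fin n) K) :
    Subgroup (Matrix (Fin n) (Fin n) K)ˣ where
  carrier := {g | (g : Matrix (Fin n) (Fin n) K) * X = X * (g : Matrix (Fin n) (Fin n) K)}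
  one_mem' := by simp
  mul_mem' := by
    intro a b ha hb
    simp only [Set.mem_setOf_eq, Units.val_mul] at *
    rw [mul_assoc, hb, ← mul_assoc, ha, mul_assoc]
  inv_mem' := by
    intro a ha
    simp only [Set.mem_setOf_eq] at *
    calc (↑a⁻¹ : Matrix (Fin n) (Fin n) K) * X
        = ↑a⁻¹ * (X * ↑a) * ↑a⁻¹ := by
          rw [mul_assoc, mul_assoc, Units.mul_inv, mul_one]
      _ = ↑a⁻¹ * (↑a * X) * ↑a⁻¹ := by rw [ha]
      _ = X * ↑a⁻¹ := by rw [← mul_assoc, Units.inv_mul, one_mul]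

/-- **Characterization of the normalizer of the centralizer of a regular nilpotent matrix.**
Let `X ∈ Mₙ(K)` be regular nilpotent (`Xⁿ = 0`, `X^(n-1) ≠ 0`) and let
`C = {g ∈ GLₙ(K) : gX = Xg}`.  Then `g ∈ GLₙ(K)` normalizes `C` if and only if
`gXg⁻¹ = c₁X + c₂X² + ⋯ + c_{n-1}X^(n-1)` for some `cᵢ ∈ K` with `c₁ ≠ 0`. -/
theorem stmt_7 {K : Type*} [Field K] (n : ℕ) (hn : 1 ≤ n)
    (X : Matrix (Fin n) (Fin n) K) (hXn : X ^ n = 0) (hXreg : X ^ (n - 1) ≠ 0)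
    (g : (Matrix (Fin n) (Fin n) K)ˣ) :
    g ∈ Subgroup.normalizer (matrixCentralizer X : Set (Matrix (Fin n) (Fin n) K)ˣ) ↔
      ∃ c : ℕ → K, c 1 ≠ 0 ∧
        (g : Matrix (Fin n) (Fin n) K) * X * ((g⁻¹ : (Matrix (Fin n) (Fin n) K)ˣ) :
            Matrix (Fin n) (Fin n) K) =
          ∑ i ∈ Finset.Icc 1 (n - 1), c i • X ^ i := by
  set G : Matrix (Fin n) (Fin n) K := (g : Matrix (Fin n) (Fin n) K) with hG
  set G' : Matrix (Fin n) (Fin n) K :=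
    ((g⁻¹ : (Matrix (Fin n) (Fin n) K)ˣ) : Matrix (Fin n) (Fin n) K) with hG'
  have hGG' : G * G' = 1 := Units.mul_inv g
  have hG'G : G' * G = 1 := Units.inv_mul g
  have hcan1 : ∀ M : Matrix (Fin n) (Fin n) K, G' * (G * M) = M := fun M => by
    rw [← mul_assoc, hG'G, one_mul]
  have hcan2 : ∀ M : Matrix (Fin n) (Fin n) K, G * (G' * M) = M := fun M => by
    rw [← mul_assoc, hGG', one_mul]
  have hconj : ∀ k : ℕ, (G * X * G') ^ k = G * X ^ k * G' := by
    intro k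
    induction k with
    | zero => rw [pow_zero, pow_zero, mul_one, hGG']
    | succ k ih =>
      rw [pow_succ, ih, pow_succ]
      simp only [mul_assoc, hcan1]
  have hconj' : ∀ k : ℕ, (G' * X * G) ^ k = G' * X ^ k * G := by
    intro k
    induction k with
    | zero => rw [pow_zero, pow_zero, mul_one, hG'G]
    | succ k ih =>
      rw [pow_succ, ih, pow_succ]
      simp only [mul_assoc, hcan2]
  constructor
  · -- forward direction
    intro hg
    set Y : Matrix (Fin n) (Fin n) K := G * X * G' with hYdef
    have hYX : Y * X = X * Y := by
      have hu : IsUnit ((1 : Matrix (Fin n) (Fin n) K) + X) :=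
        IsNilpotent.isUnit_one_add ⟨n, hXn⟩
      have humem : hu.unit ∈ matrixCentralizer X := by
        show ((hu.unit : Matrix (Fin n) (Fin n) K)) * X = X * (hu.unit : Matrix (Fin n) (Fin n) K)
        rw [IsUnit.unit_spec, add_mul, mul_add, one_mul, mul_one]
      have h2 := (Subgroup.mem_normalizer_iff.mp hg hu.unit).mp humem
      have h3 : (↑(g * hu.unit * g⁻¹) : Matrix (Fin n) (Fin n) K) * X
          = X * (↑(g * hu.unit * g⁻¹) : Matrix (Fin n) (Fin n) K) := h2
      rw [Units.val_mul, Units.val_mul, IsUnit.unit_spec, ← hG, ← hG'] at h3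
      have h4 : G * (1 + X) * G' = 1 + Y := by
        rw [mul_add, mul_one, add_mul, hGG', ← hYdef]
      rw [h4, add_mul, mul_add, one_mul, mul_one] at h3
      exact add_left_cancel h3
    obtain ⟨e, he⟩ := exists_rep hn X hXn hXreg Y hYX
    set cf : ℕ → K := fun i => if h : i < n then e ⟨i, h⟩ else 0 with hcf
    have hY1 : Y = ∑ i ∈ Finset.range n, cf i • X ^ i := by
      rw [he, ← Fin.sum_univ_eq_sum_range (fun i => cf i • X ^ i) n]
      refine Finset.sum_congr rfl fun i _ => ?_
      simp [hcf, i.isLt]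
    have hsplit : Finset.range n = insert 0 (Finset.Icc 1 (n - 1)) := by
      ext a
      simp only [Finset.mem_range, Finset.mem_insert, Finset.mem_Icc]
      omega
    have h0notin : (0 : ℕ) ∉ Finset.Icc 1 (n - 1) := by simp
    have hY2 : Y = cf 0 • (1 : Matrix (Fin n) (Fin n) K)
        + ∑ i ∈ Finset.Icc 1 (n - 1), cf i • X ^ i := by
      rw [hY1, hsplit, Finset.sum_insert h0notin, pow_zero]
    have hmulY : X ^ (n - 1) * Y = cf 0 • X ^ (n - 1) := by
      rw [hY2, mul_add, Finset.mul_sum]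
      have hz : ∑ i ∈ Finset.Icc 1 (n - 1), X ^ (n - 1) * (cf i • X ^ i) = 0 :=
        Finset.sum_eq_zero fun i hi => by
          have hi1 := (Finset.mem_Icc.mp hi).1
          rw [mul_smul_comm, ← pow_add, pow_zero_of_le hXn (by omega), smul_zero]
      rw [hz, add_zero, mul_smul_comm, mul_one]
    have hYk : ∀ k, X ^ (n - 1) * Y ^ k = cf 0 ^ k • X ^ (n - 1) := by
      intro k
      induction k with
      | zero => simp
      | succ k ih =>
        rw [pow_succ', ← mul_assoc, hmulY, smul_mul_assoc, ih, smul_smul, ← pow_succ']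
    have hYn : Y ^ n = 0 := by
      rw [hYdef, hconj n, hXn, mul_zero, zero_mul]
    have hc0 : cf 0 = 0 := by
      have h5 := hYk n
      rw [hYn, mul_zero] at h5
      have h6 := (smul_eq_zero.mp h5.symm).resolve_right hXreg
      exact pow_eq_zero_iff (show n ≠ 0 by omega) |>.mp h6
    have hY3 : Y = ∑ i ∈ Finset.Icc 1 (n - 1), cf i • X ^ i := by
      rw [hY2, hc0, zero_smul, zero_add]
    rcases eq_or_lt_of_le hn with h1 | h2
    · -- n = 1
      refine ⟨fun _ => 1, one_ne_zero, ?_⟩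
      have hX0 : X = 0 := by
        rw [← pow_one X, h1]
        exact hXn
      rw [show Finset.Icc 1 (n - 1) = ∅ from Finset.Icc_eq_empty (by omega)]
      rw [hYdef, hX0, Finset.sum_empty, mul_zero, zero_mul]
    · -- 2 ≤ n
      refine ⟨cf, ?_, hY3⟩
      intro hc1
      have hIcc : Finset.Icc 1 (n - 1) = insert 1 (Finset.Icc 2 (n - 1)) := by
        ext a
        simp only [Finset.mem_insert, Finset.mem_Icc]
        omega
      have h1notin : (1 : ℕ) ∉ Finset.Icc 2 (n - 1) := by simp
      have hY4 : Y = ∑ i ∈ Finset.Icc 2 (n - 1), cf i • X ^ i := by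
        rw [hY3, hIcc, Finset.sum_insert h1notin, hc1, zero_smul, zero_add]
      set D : Matrix (Fin n) (Fin n) K :=
        ∑ i ∈ Finset.Icc 2 (n - 1), cf i • X ^ (i - 2) with hD
      have hYD : Y = X ^ 2 * D := by
        rw [hY4, hD, Finset.mul_sum]
        refine Finset.sum_congr rfl fun i hi => ?_
        have hi2 := (Finset.mem_Icc.mp hi).1
        rw [mul_smul_comm, ← pow_add, Nat.add_sub_cancel' hi2]
      have hXD : Commute (X ^ 2) D :=
        commute_sum_smul_pow ((Commute.refl X).pow_left 2) _ _ _
      have hY5 : Y ^ (n - 1) = 0 := by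
        rw [hYD, hXD.mul_pow, ← pow_mul, pow_zero_of_le hXn (by omega), zero_mul]
      have h6 : G * X ^ (n - 1) * G' = 0 := by
        rw [← hconj (n - 1)]
        exact hY5
      have h7 : X ^ (n - 1) = G' * (G * X ^ (n - 1) * G') * G := by
        simp only [mul_assoc, hcan1, hG'G, mul_one]
      rw [h6, mul_zero, zero_mul] at h7
      exact hXreg h7
  · -- backward direction
    rintro ⟨c, hc1, hY⟩
    rw [Subgroup.mem_normalizer_iff]
    intro h
    set Z : Matrix (Fin n) (Fin n) K := G' * X * G with hZ
    have hXZ : X = ∑ i ∈ Finset.Icc 1 (n - 1), c i • Z ^ i := by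
      calc X = G' * (G * X * G') * G := by
              simp only [mul_assoc, hcan1, hG'G, mul_one]
        _ = G' * (∑ i ∈ Finset.Icc 1 (n - 1), c i • X ^ i) * G := by rw [hY]
        _ = ∑ i ∈ Finset.Icc 1 (n - 1), c i • Z ^ i := by
            rw [Finset.mul_sum, Finset.sum_mul]
            refine Finset.sum_congr rfl fun i _ => ?_
            rw [mul_smul_comm, smul_mul_assoc, hZ, hconj' i]
    have hZX : Z * X = X * Z := by
      have h2 : Commute Z X := by
        rw [hXZ]
        exact commute_sum_smul_pow (Commute.refl Z) _ _ _
      exact h2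
    obtain ⟨e, he⟩ := exists_rep hn X hXn hXreg Z hZX
    have key : ∀ M : Matrix (Fin n) (Fin n) K, (M * X = X * M) ↔ (M * Z = Z * M) := by
      intro M
      constructor
      · intro hM
        have h2 : Commute M (∑ i : Fin n, e i • X ^ (i : ℕ)) :=
          commute_sum_smul_pow (hM : Commute M X) _ _ _
        rw [← he] at h2
        exact h2
      · intro hM
        have h2 : Commute M (∑ i ∈ Finset.Icc 1 (n - 1), c i • Z ^ i) :=
          commute_sum_smul_pow (hM : Commute M Z) _ _ _
        rw [← hXZ] at h2
        exact h2
    have conj_comm : ∀ M : Matrix (Fin n) (Fin n) K,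
        ((G * M * G') * X = X * (G * M * G')) ↔ (M * Z = Z * M) := by
      intro M
      constructor
      · intro H
        have h9 := congrArg (fun P => G' * P * G) H
        simp only [mul_assoc, hcan1, hG'G, mul_one] at h9
        rw [hZ]
        simp only [mul_assoc]
        exact h9
      · intro H
        rw [hZ] at H
        have h9 := congrArg (fun P => G * P * G') H
        simp only [mul_assoc, hcan2, hGG', hG'G, mul_one, one_mul] at h9
        simp only [mul_assoc]
        exact h9
    constructor
    · intro hh
      have hh' : (↑h : Matrix (Fin n) (Fin n) K) * X = X * (↑h : Matrix (Fin n) (Fin n) K) := hh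
      show (↑(g * h * g⁻¹) : Matrix (Fin n) (Fin n) K) * X
        = X * (↑(g * h * g⁻¹) : Matrix (Fin n) (Fin n) K)
      rw [Units.val_mul, Units.val_mul, ← hG, ← hG']
      exact (conj_comm ↑h).mpr ((key ↑h).mp hh')
    · intro hh
      have hh' : (↑(g * h * g⁻¹) : Matrix (Fin n) (Fin n) K) * X
          = X * (↑(g * h * g⁻¹) : Matrix (Fin n) (Fin n) K) := hh
      rw [Units.val_mul, Units.val_mul, ← hG, ← hG'] at hh'
      show (↑h : Matrix (Fin n) (Fin n) K) * X = X * (↑h : Matrix (Fin n) (Fin n) K)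
      exact (key ↑h).mpr ((conj_comm ↑h).mp hh')
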